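/- Let G be a cosheaf on a T0 Alexandroff space X. Then for every open set U of X, the natural map colim over x ∈ U of G(U_x) → G(U), induced by the inclusions U_x ⊆ U, is an isomorphism, where the colimit is taken over the poset U with x ≤ y iff U_x ⊆ U_y. -/

import Mathlib

open CategoryTheory CategoryTheory.Limits TopologicalSpace


/-- The minimal open set containing `x`. -/
def minOpen {X : Type} [TopologicalSpace X] (x : X) : Set X :=
  ⋂₀ {U : Set X | IsOpen U ∧ x ∈ U}

lemma isOpen_minOpen {X : Type} [TopologicalSpace X] [AlexandrovDiscrete X] (x : X) :
    IsOpen (minOpen x) :=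
  isOpen_sInter fun _ h => h.1

/-- The minimal open set containing `x`, as an element of `Opens X`. -/
def Uo {X : Type} [TopologicalSpace X] [AlexandrovDiscrete X] (x : X) : Opens X :=
  ⟨minOpen x, isOpen_minOpen x⟩

lemma minOpen_le {X : Type} [TopologicalSpace X] {x : X} {U : Opens X} (hx : x ∈ U) :
    minOpen x ⊆ (U : Set X) :=
  Set.sInter_subset_of_mem ⟨U.isOpen, hx⟩

/-- A precosheaf of abelian groups on `X`: a covariant functor on open sets. -/
abbrev Precosheaf (X : Type) [TopologicalSpace X] := Opens X ⥤ AddCommGrpCat.{0}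

variable {X : Type} [TopologicalSpace X]

/-- The nerve of an open cover: the nonempty finite intersections of its members. -/
def nerveSet (𝒰 : Set (Opens X)) : Set (Opens X) :=
  {V | (V : Set X).Nonempty ∧ ∃ s : Finset (Opens X), ↑s ⊆ 𝒰 ∧ s.Nonempty ∧ V = s.inf id}

lemma nerve_le {𝒰 : Set (Opens X)} {U : Opens X} (h : ∀ V ∈ 𝒰, V ≤ U)
    {V : Opens X} (hV : V ∈ nerveSet 𝒰) : V ≤ U := by
  obtain ⟨-, s, hs, ⟨w, hw⟩, rfl⟩ := hV
  exact le_trans (Finset.inf_le hw) (h w (hs hw))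

/-- The diagram of a precosheaf over the nerve of an open cover. -/
def nerveDiagram (F : Precosheaf X) (𝒰 : Set (Opens X)) :
    ObjectProperty.FullSubcategory (· ∈ nerveSet 𝒰) ⥤ AddCommGrpCat.{0} :=
  ObjectProperty.ι (· ∈ nerveSet 𝒰) ⋙ F

/-- The canonical cocone on the nerve diagram with apex `F(U)`. -/
def coverCocone (F : Precosheaf X) (U : Opens X) (𝒰 : Set (Opens X))
    (h : ∀ V ∈ 𝒰, V ≤ U) : Cocone (nerveDiagram F 𝒰) where
  pt := F.obj U
  ι :=
    { app := fun V => F.map (homOfLE (nerve_le h V.2))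
      naturality := fun a b f => by
        dsimp [nerveDiagram]
        rw [Category.comp_id, ← F.map_comp]
        rfl }

/-- A precosheaf is a cosheaf if for every open `U` and every open cover `𝒰` of `U`, the
canonical map from the colimit over the nerve of `𝒰` to `F(U)` is an isomorphism, i.e.
`F(U)` is the colimit of the nerve diagram. -/
def IsCosheaf (F : Precosheaf X) : Prop :=
  ∀ (U : Opens X) (𝒰 : Set (Opens X)) (h𝒰 : ∀ V ∈ 𝒰, V ≤ U), U ≤ sSup 𝒰 →
    Nonempty (IsColimit (coverCocone F U 𝒰 h𝒰))

/-- The Alexandroff space `X(P)` of a poset `P`: open sets are the up-sets. -/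
def upTop (P : Type) [Preorder P] : TopologicalSpace P where
  IsOpen := IsUpperSet
  isOpen_univ := isUpperSet_univ
  isOpen_inter _ _ := IsUpperSet.inter
  isOpen_sUnion _ h := isUpperSet_sUnion h

variable {P : Type} [PartialOrder P]

/-- The diagram of a cellular cosheaf `F : P ⥤ Ab` over the subposet `U ⊆ P`. -/
def openDiagram (F : P ⥤ AddCommGrpCat.{0}) (U : Set P) :
    ObjectProperty.FullSubcategory (· ∈ U) ⥤ AddCommGrpCat.{0} :=
  ObjectProperty.ι (· ∈ U) ⋙ F

noncomputable def hatMap (F : P ⥤ AddCommGrpCat.{0}) {U V : Set P} (h : U ⊆ V) :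
    colimit (openDiagram F U) ⟶ colimit (openDiagram F V) :=
  colimit.pre (openDiagram F V) (ObjectProperty.ιOfLE fun _ hx => h hx)

lemma hatMap_ι (F : P ⥤ AddCommGrpCat.{0}) {U V : Set P} (h : U ⊆ V)
    (j : ObjectProperty.FullSubcategory (· ∈ U)) :
    colimit.ι (openDiagram F U) j ≫ hatMap F h =
      colimit.ι (openDiagram F V) ⟨j.1, h j.2⟩ := by
  exact colimit.ι_pre (openDiagram F V) (ObjectProperty.ιOfLE fun _ hx => h hx) j

/-- The cosheaf `F̂` on `X(P)` associated to a cellular cosheaf `F : P ⥤ Ab`,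
with `F̂(U) = colim_{x ∈ U} F(x)`. -/
noncomputable def hatF (F : P ⥤ AddCommGrpCat.{0}) :
    @TopologicalSpace.Opens P (upTop P) ⥤ AddCommGrpCat.{0} where
  obj U := colimit (openDiagram F (U : Set P))
  map {U V} h := hatMap F h.le
  map_id U := by
    apply colimit.hom_ext
    intro j
    erw [hatMap_ι]
    simp
  map_comp {U V W} f g := by
    apply colimit.hom_ext
    intro j
    exact (hatMap_ι F (f ≫ g).le j).trans ((hatMap_ι F g.le ⟨j.1, f.le j.2⟩).symm.trans
      ((congrArg (· ≫ hatMap F g.le) (hatMap_ι F f.le j).symm).trans (Category.assoc _ _ _)))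

section PtDiagram
variable {X : Type} [TopologicalSpace X]

/-- The points of `U`, preordered by `x ≤ y` iff `U_x ⊆ U_y`. -/
def PtCat (U : Set X) : Type := {x : X // x ∈ U}

instance (U : Set X) : Preorder (PtCat U) where
  le a b := minOpen a.1 ⊆ minOpen b.1
  le_refl _ := subset_rfl
  le_trans _ _ _ h1 h2 := Set.Subset.trans h1 h2

variable [AlexandrovDiscrete X]

/-- The diagram `x ∈ U ↦ G(U_x)` over the poset `U` (with `x ≤ y` iff `U_x ⊆ U_y`). -/
def ptDiagram (G : Precosheaf X) (U : Set X) : PtCat U ⥤ AddCommGrpCat.{0} where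
  obj x := G.obj (Uo x.1)
  map {a b} f := G.map (homOfLE (SetLike.coe_subset_coe.mp f.le))
  map_id a := G.map_id _
  map_comp f g := G.map_comp _ _

/-- The canonical cocone on `ptDiagram G U` with apex `G(U)`, given by the inclusions
`U_x ⊆ U`. -/
def ptCocone (G : Precosheaf X) (U : Opens X) : Cocone (ptDiagram G (U : Set X)) where
  pt := G.obj U
  ι :=
    { app := fun x => G.map (homOfLE (minOpen_le x.2))
      naturality := fun a b f => by
        dsimp [ptDiagram]
        rw [Category.comp_id, ← G.map_comp]
        rfl }

end PtDiagram

section Stmt8Aux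

variable {X : Type} [TopologicalSpace X] [AlexandrovDiscrete X]

omit [AlexandrovDiscrete X] in
lemma mem_minOpen_self (x : X) : x ∈ minOpen x :=
  Set.mem_sInter.mpr fun _ hU => hU.2

lemma Uo_le_of_mem {z : X} {W : Opens X} (hz : z ∈ W) : Uo z ≤ W :=
  fun _ ha => minOpen_le hz ha

/-- The cover of `W` by the minimal open sets of its points. -/
def ptCover (W : Opens X) : Set (Opens X) := {V | ∃ z, ∃ _ : z ∈ W, V = Uo z}

lemma ptCover_le (W : Opens X) : ∀ V ∈ ptCover W, V ≤ W := by
  rintro V ⟨z, hz, rfl⟩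
  exact Uo_le_of_mem hz

lemma le_sSup_ptCover (W : Opens X) : W ≤ sSup (ptCover W) := by
  intro x hx
  exact Opens.mem_sSup.mpr ⟨Uo x, ⟨x, hx, rfl⟩, mem_minOpen_self x⟩

lemma Uo_mem_nerveSet {z : X} {W : Opens X} (hz : z ∈ W) :
    Uo z ∈ nerveSet (ptCover W) := by
  refine ⟨⟨z, mem_minOpen_self z⟩, {Uo z}, ?_, ⟨Uo z, Finset.mem_singleton_self _⟩, by simp⟩
  intro V hV
  rw [Finset.coe_singleton, Set.mem_singleton_iff] at hV
  exact ⟨z, hz, hV⟩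

lemma nerve_pt {W V : Opens X} (hV : V ∈ nerveSet (ptCover W)) :
    ∃ z, ∃ _ : z ∈ W, V ≤ Uo z := by
  obtain ⟨-, s, hs, ⟨w, hw⟩, rfl⟩ := hV
  obtain ⟨z, hz, rfl⟩ := hs hw
  exact ⟨z, hz, Finset.inf_le hw⟩

omit [AlexandrovDiscrete X] in
lemma Gmap_comp_eq (G : Precosheaf X) {a b c : Opens X} (f : a ⟶ b) (g : b ⟶ c)
    (h : a ≤ c) : G.map f ≫ G.map g = G.map (homOfLE h) := by
  rw [← G.map_comp]
  exact congrArg G.map (Subsingleton.elim _ _)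

omit [AlexandrovDiscrete X] in
lemma Gmap_eq (G : Precosheaf X) {a b : Opens X} (f g : a ⟶ b) : G.map f = G.map g :=
  congrArg G.map (Subsingleton.elim f g)

omit [AlexandrovDiscrete X] in
lemma Gmap_map (G : Precosheaf X) {a b c : Opens X} (f : a ⟶ b) (g : b ⟶ c)
    (h : a ≤ c) (x : G.obj a) :
    G.map g (G.map f x) = G.map (homOfLE h) x := by
  rw [← comp_apply, Gmap_comp_eq G f g h]

/-- `G W` is generated by the images of the `G (U_z)`, `z ∈ W`. -/
lemma mem_iSup_pt_range (G : Precosheaf X) (hG : IsCosheaf G) (W : Opens X)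
    (g : G.obj W) :
    g ∈ ⨆ (z : X) (hz : z ∈ W),
      AddMonoidHom.range (G.map (homOfLE (Uo_le_of_mem hz))).hom := by
  classical
  obtain ⟨hW⟩ := hG W (ptCover W) (ptCover_le W) (le_sSup_ptCover W)
  set S : AddSubgroup (G.obj W) :=
    ⨆ (z : X) (hz : z ∈ W),
      AddMonoidHom.range (G.map (homOfLE (Uo_le_of_mem hz))).hom with hS
  choose zf hzf hlef using
    fun (V : ObjectProperty.FullSubcategory (· ∈ nerveSet (ptCover W))) => nerve_pt V.2
  have hrange : ∀ V : ObjectProperty.FullSubcategory (· ∈ nerveSet (ptCover W)),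
      ∀ g : G.obj V.obj, G.map (homOfLE (nerve_le (ptCover_le W) V.2)) g ∈ S := by
    intro V g
    have h2 : G.map (homOfLE (nerve_le (ptCover_le W) V.2)) g
        = G.map (homOfLE (Uo_le_of_mem (hzf V))) (G.map (homOfLE (hlef V)) g) :=
      (Gmap_map G (homOfLE (hlef V)) (homOfLE (Uo_le_of_mem (hzf V)))
        (nerve_le (ptCover_le W) V.2) g).symm
    rw [h2]
    have hle : AddMonoidHom.range (G.map (homOfLE (Uo_le_of_mem (hzf V)))).hom ≤ S :=
      le_iSup_of_le (zf V) (le_iSup_of_le (hzf V) le_rfl)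
    exact hle ⟨_, rfl⟩
  let cc : Cocone (nerveDiagram G (ptCover W)) :=
  { pt := AddCommGrpCat.of S
    ι :=
    { app := fun V =>
        AddCommGrpCat.ofHom (AddMonoidHom.codRestrict (G.map (homOfLE (nerve_le (ptCover_le W) V.2))).hom S
          (hrange V))
      naturality := fun Va Vb fab => by
        have hc : (nerveDiagram G (ptCover W)).map fab
            ≫ G.map (homOfLE (nerve_le (ptCover_le W) Vb.2))
            = G.map (homOfLE (nerve_le (ptCover_le W) Va.2)) :=
          Gmap_comp_eq G ((ObjectProperty.ι (· ∈ nerveSet (ptCover W))).map fab)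
            (homOfLE (nerve_le (ptCover_le W) Vb.2)) (nerve_le (ptCover_le W) Va.2)
        ext g
        apply Subtype.ext
        show G.map (homOfLE (nerve_le (ptCover_le W) Vb.2))
            ((nerveDiagram G (ptCover W)).map fab g)
          = G.map (homOfLE (nerve_le (ptCover_le W) Va.2)) g
        exact congrArg (fun k => k g) hc } }
  have hsec : hW.desc cc ≫ AddCommGrpCat.ofHom S.subtype = 𝟙 (G.obj W) := by
    apply hW.hom_ext
    intro V
    rw [← Category.assoc, hW.fac]
    ext g
    rfl
  have hg : AddCommGrpCat.ofHom S.subtype (hW.desc cc g) = g := by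
    exact congrArg (fun k => k g) hsec
  rw [← hg]
  exact (hW.desc cc g).2

/-- Two maps out of `G W` agreeing on all images of minimal opens agree. -/
lemma pt_hom_ext (G : Precosheaf X) (hG : IsCosheaf G) {W : Opens X} {A : AddCommGrpCat.{0}}
    (f f' : G.obj W ⟶ A)
    (h : ∀ (z : X) (hz : z ∈ W) (g : G.obj (Uo z)),
      f (G.map (homOfLE (Uo_le_of_mem hz)) g) = f' (G.map (homOfLE (Uo_le_of_mem hz)) g)) :
    f = f' := by
  have hloc : (⨆ (z : X) (hz : z ∈ W),
        AddMonoidHom.range (G.map (homOfLE (Uo_le_of_mem hz))).hom)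
      ≤ AddMonoidHom.eqLocus f.hom f'.hom := by
    refine iSup_le fun z => iSup_le fun hz => ?_
    rintro _ ⟨g, rfl⟩
    exact h z hz g
  ext g
  exact hloc (mem_iSup_pt_range G hG W g)

omit [AlexandrovDiscrete X] in
lemma ptCat_le_mk {U : Set X} {w z : X} (hw : w ∈ U) (hz : z ∈ U)
    (h : minOpen w ⊆ minOpen z) : @LE.le (PtCat U) _ ⟨w, hw⟩ ⟨z, hz⟩ := h

/-- Naturality of a cocone over the point diagram, in element form. -/
lemma pt_cocone_nat (G : Precosheaf X) {U : Opens X}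
    (c : Cocone (ptDiagram G (U : Set X))) {w z : X}
    (hw : w ∈ (U : Set X)) (hz : z ∈ (U : Set X)) (hle : Uo w ≤ Uo z)
    (g : G.obj (Uo w)) :
    c.ι.app ⟨z, hz⟩ (G.map (homOfLE hle) g) = c.ι.app ⟨w, hw⟩ g := by
  have h1 := c.w (homOfLE (ptCat_le_mk hw hz hle))
  have h2 : (ptDiagram G (U : Set X)).map (homOfLE (ptCat_le_mk hw hz hle))
      = G.map (homOfLE hle) :=
    congrArg G.map (Subsingleton.elim _ _)
  rw [h2] at h1
  exact congrArg (fun k => k g) h1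

end Stmt8Aux

/-- For a cosheaf `G` on a `T0` Alexandroff space, the natural map
`colim_{x ∈ U} G(U_x) → G(U)` is an isomorphism for every open `U`. -/
theorem stmt_8 {X : Type} [TopologicalSpace X] [AlexandrovDiscrete X] [T0Space X]
    (G : Precosheaf X) (hG : IsCosheaf G) (U : Opens X) :
    Nonempty (IsColimit (ptCocone G U)) := by
  classical
  obtain ⟨hU⟩ := hG U (ptCover U) (ptCover_le U) (le_sSup_ptCover U)
  choose zf hzf hlef using
    fun (V : ObjectProperty.FullSubcategory (· ∈ nerveSet (ptCover U))) => nerve_pt V.2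
  -- the cocone on the nerve diagram induced by a cocone on the point diagram
  let mkcc : Cocone (ptDiagram G (U : Set X)) → Cocone (nerveDiagram G (ptCover U)) :=
    fun c =>
    { pt := c.pt
      ι :=
      { app := fun V => G.map (homOfLE (hlef V)) ≫ c.ι.app ⟨zf V, hzf V⟩
        naturality := fun Va Vb fab => by
          simp only [Functor.const_obj_map, Category.comp_id]
          refine pt_hom_ext G hG _ _ ?_
          intro w hw g
          have hwU : w ∈ U := (nerve_le (ptCover_le U) Va.2) hw
          have hfab : Va.obj ≤ Vb.obj :=
            leOfHom ((ObjectProperty.ι (· ∈ nerveSet (ptCover U))).map fab)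
          have h1 : Uo w ≤ Vb.obj := le_trans (Uo_le_of_mem hw) hfab
          have h2 : Uo w ≤ Uo (zf Vb) := le_trans h1 (hlef Vb)
          have h3 : Uo w ≤ Uo (zf Va) := le_trans (Uo_le_of_mem hw) (hlef Va)
          show c.ι.app ⟨zf Vb, hzf Vb⟩
              (G.map (homOfLE (hlef Vb))
                ((nerveDiagram G (ptCover U)).map fab
                  (G.map (homOfLE (Uo_le_of_mem hw)) g)))
            = c.ι.app ⟨zf Va, hzf Va⟩
                (G.map (homOfLE (hlef Va)) (G.map (homOfLE (Uo_le_of_mem hw)) g))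
          have e1 : (nerveDiagram G (ptCover U)).map fab
              (G.map (homOfLE (Uo_le_of_mem hw)) g) = G.map (homOfLE h1) g :=
            Gmap_map G (homOfLE (Uo_le_of_mem hw))
              ((ObjectProperty.ι (· ∈ nerveSet (ptCover U))).map fab) h1 g
          have e2 : G.map (homOfLE (hlef Vb)) (G.map (homOfLE h1) g)
              = G.map (homOfLE h2) g :=
            Gmap_map G (homOfLE h1) (homOfLE (hlef Vb)) h2 g
          have e3 : G.map (homOfLE (hlef Va)) (G.map (homOfLE (Uo_le_of_mem hw)) g)
              = G.map (homOfLE h3) g :=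
            Gmap_map G (homOfLE (Uo_le_of_mem hw)) (homOfLE (hlef Va)) h3 g
          exact (congrArg
              (fun t => c.ι.app ⟨zf Vb, hzf Vb⟩ (G.map (homOfLE (hlef Vb)) t)) e1).trans
            ((congrArg (c.ι.app ⟨zf Vb, hzf Vb⟩) e2).trans
              ((pt_cocone_nat G c hwU (hzf Vb) h2 g).trans
                ((pt_cocone_nat G c hwU (hzf Va) h3 g).symm.trans
                  (congrArg (c.ι.app ⟨zf Va, hzf Va⟩) e3).symm))) } }
  refine ⟨{ desc := fun c => hU.desc (mkcc c), fac := ?_, uniq := ?_ }⟩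
  · intro c x
    beta_reduce
    have hx : Uo x.1 ∈ nerveSet (ptCover U) := Uo_mem_nerveSet x.2
    have h1 : (ptCocone G U).ι.app x
        = (coverCocone G U (ptCover U) (ptCover_le U)).ι.app ⟨Uo x.1, hx⟩ := by
      show G.map _ = G.map _
      exact Gmap_eq G _ _
    refine (congrArg (· ≫ hU.desc (mkcc c)) h1).trans ((hU.fac (mkcc c) ⟨Uo x.1, hx⟩).trans ?_)
    ext g
    show c.ι.app ⟨zf ⟨Uo x.1, hx⟩, hzf ⟨Uo x.1, hx⟩⟩
        (G.map (homOfLE (hlef ⟨Uo x.1, hx⟩)) g) = c.ι.app x g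
    rw [pt_cocone_nat G c x.2 (hzf ⟨Uo x.1, hx⟩) (hlef ⟨Uo x.1, hx⟩) g]
    rfl
  · intro c m hm
    refine hU.uniq (mkcc c) m ?_
    intro V
    refine pt_hom_ext G hG _ _ ?_
    intro w hw g
    have hwU : w ∈ U := (nerve_le (ptCover_le U) V.2) hw
    have h2 : Uo w ≤ U := le_trans (Uo_le_of_mem hw) (nerve_le (ptCover_le U) V.2)
    have h3 : Uo w ≤ Uo (zf V) := le_trans (Uo_le_of_mem hw) (hlef V)
    have e1 : G.map (homOfLE (nerve_le (ptCover_le U) V.2))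
        (G.map (homOfLE (Uo_le_of_mem hw)) g) = G.map (homOfLE h2) g :=
      Gmap_map G (homOfLE (Uo_le_of_mem hw))
        (homOfLE (nerve_le (ptCover_le U) V.2)) h2 g
    have e2 : G.map (homOfLE (hlef V)) (G.map (homOfLE (Uo_le_of_mem hw)) g)
        = G.map (homOfLE h3) g :=
      Gmap_map G (homOfLE (Uo_le_of_mem hw)) (homOfLE (hlef V)) h3 g
    exact (congrArg m e1).trans
      ((congrArg (fun k => k g) (hm ⟨w, hwU⟩)).trans
        ((pt_cocone_nat G c hwU (hzf V) h3 g).symm.trans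
          (congrArg (c.ι.app ⟨zf V, hzf V⟩) e2).symm))
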